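/- Let A be a commutative fusion ring satisfying the split semisimplicity, *-character, and trace decomposition assumptions, and fix a character δ with δ(b_i) ≠ 0 for all i. Define I₃(ρ₁,ρ₂,ρ₃) := Σ_{i∈I} δ(b_i)^{-1} ρ₁(b_i) ρ₂(b_i) ρ₃(b_i) for characters ρ₁, ρ₂, ρ₃. Then the product on the complex vector space spanned by the characters of A_ℂ defined on basis elements by ρ₁ ∗ ρ₂ := Σ_ρ α_ρ^{-1} · I₃(ρ₁, ρ₂, ρ̄) · ρ (sum over all characters ρ, where ρ̄(b_i) = conj(ρ(b_i))) is commutative and associative; explicitly, I₃(ρ₁,ρ₂,σ) = I₃(ρ₂,ρ₁,σ) for all characters, and for all characters ρ₁, ρ₂, ρ₃, σ one has Σ_ρ α_ρ^{-1} I₃(ρ₁,ρ₂,ρ̄) I₃(ρ,ρ₃,σ) = Σ_ρ α_ρ^{-1} I₃(ρ₂,ρ₃,ρ̄) I₃(ρ₁,ρ,σ). -/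

import Mathlib

open scoped BigOperators

/-- A fusion ring datum: finite index set `I`, unit index `zero`, duality involution `dual`,
and structure constants `N` satisfying associativity, unit, duality and symmetry axioms. -/
structure FusionData (I : Type*) [Fintype I] [DecidableEq I] where
  zero : I
  dual : I → I
  N : I → I → I → ℕ
  dual_dual : ∀ i, dual (dual i) = i
  dual_zero : dual zero = zero
  assoc : ∀ i j k l, ∑ m, N i j m * N m k l = ∑ m, N j k m * N i m l
  unit_left : ∀ j m, N zero j m = if j = m then 1 else 0
  unit_right : ∀ i m, N i zero m = if i = m then 1 else 0
  duality : ∀ i j, N i j zero = if j = dual i then 1 else 0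
  sym1 : ∀ i j m, N i j m = N j (dual m) (dual i)
  sym2 : ∀ i j m, N i j m = N (dual m) i (dual j)
  sym3 : ∀ i j m, N i j m = N (dual j) (dual i) (dual m)

/-- The formal codegree `α_ρ = ∑ i, |ρ (b i)|²` of a character `ρ` of the complexified
fusion ring, given as a ℂ-algebra `A` with basis `b`. -/
noncomputable def formalCodegree {I : Type*} [Fintype I] {A : Type*} [CommRing A] [Algebra ℂ A]
    (b : Module.Basis I ℂ A) (ρ : A →ₐ[ℂ] ℂ) : ℝ :=
  ∑ i, Complex.normSq (ρ (b i))

/-- `I₃(ρ₁,ρ₂,ρ₃) := ∑ i, δ(b i)⁻¹ ρ₁(b i) ρ₂(b i) ρ₃(b i)` for characters of the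
complexified commutative fusion ring, relative to a fixed character `δ` nonvanishing on
the basis. -/
noncomputable def I₃ {I : Type*} [Fintype I] {A : Type*} [CommRing A] [Algebra ℂ A]
    (b : Module.Basis I ℂ A) (δ ρ₁ ρ₂ ρ₃ : A →ₐ[ℂ] ℂ) : ℂ :=
  ∑ i, (δ (b i))⁻¹ * (ρ₁ (b i) * ρ₂ (b i) * ρ₃ (b i))

/-- The product `ρ₁ ∗ ρ₂ := ∑ ρ, α_ρ⁻¹ I₃(ρ₁,ρ₂,ρ̄) ρ` on the span of the characters is
commutative and associative; explicitly, `I₃(ρ₁,ρ₂,σ) = I₃(ρ₂,ρ₁,σ)` and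
`∑ ρ, α_ρ⁻¹ I₃(ρ₁,ρ₂,ρ̄) I₃(ρ,ρ₃,σ) = ∑ ρ, α_ρ⁻¹ I₃(ρ₂,ρ₃,ρ̄) I₃(ρ₁,ρ,σ)`. -/
theorem dual_fusion_product_comm_assoc {I : Type*} [Fintype I] [DecidableEq I]
    (F : FusionData I)
    {A : Type*} [CommRing A] [Algebra ℂ A] (b : Module.Basis I ℂ A)
    (hb1 : b F.zero = 1)
    (hbmul : ∀ i j, b i * b j = ∑ m, (F.N i j m : ℂ) • b m)
    -- split semisimplicity: the characters number `|I|` and form a basis of the dual space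
    [Fintype (A →ₐ[ℂ] ℂ)]
    (hcard : Fintype.card (A →ₐ[ℂ] ℂ) = Fintype.card I)
    (hind : LinearIndependent ℂ fun ρ : A →ₐ[ℂ] ℂ => (ρ.toLinearMap : A →ₗ[ℂ] ℂ))
    (hspan : ⊤ ≤ Submodule.span ℂ
      (Set.range fun ρ : A →ₐ[ℂ] ℂ => (ρ.toLinearMap : A →ₗ[ℂ] ℂ)))
    -- every character is a *-character
    (hstarchar : ∀ (ρ : A →ₐ[ℂ] ℂ) (i : I), ρ (b (F.dual i)) = starRingEnd ℂ (ρ (b i)))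
    -- the trace decomposition `τ(a) = ∑ ρ, α_ρ⁻¹ ρ(a)`
    (htau : ∀ a : A, (b.repr a F.zero : ℂ)
      = ∑ ρ : A →ₐ[ℂ] ℂ, ((formalCodegree b ρ : ℝ) : ℂ)⁻¹ * ρ a)
    (δ : A →ₐ[ℂ] ℂ) (hδ : ∀ i, δ (b i) ≠ 0)
    -- `conjChar ρ` is the complex conjugate character `ρ̄`
    (conjChar : (A →ₐ[ℂ] ℂ) → (A →ₐ[ℂ] ℂ))
    (hconj : ∀ (ρ : A →ₐ[ℂ] ℂ) (i : I), conjChar ρ (b i) = starRingEnd ℂ (ρ (b i))) :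
    (∀ ρ₁ ρ₂ σ : A →ₐ[ℂ] ℂ, I₃ b δ ρ₁ ρ₂ σ = I₃ b δ ρ₂ ρ₁ σ)
    ∧ ∀ ρ₁ ρ₂ ρ₃ σ : A →ₐ[ℂ] ℂ,
        (∑ ρ : A →ₐ[ℂ] ℂ, ((formalCodegree b ρ : ℝ) : ℂ)⁻¹ *
          I₃ b δ ρ₁ ρ₂ (conjChar ρ) * I₃ b δ ρ ρ₃ σ)
        = ∑ ρ : A →ₐ[ℂ] ℂ, ((formalCodegree b ρ : ℝ) : ℂ)⁻¹ *
            I₃ b δ ρ₂ ρ₃ (conjChar ρ) * I₃ b δ ρ₁ ρ σ := by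

  classical
  -- orthogonality relation
  have orth : ∀ i j : I,
      (∑ ρ : A →ₐ[ℂ] ℂ, ((formalCodegree b ρ : ℝ) : ℂ)⁻¹ *
        (starRingEnd ℂ (ρ (b i)) * ρ (b j)))
      = if i = j then 1 else 0 := by
    intro i j
    have h := htau (b (F.dual i) * b j)
    have hrepr : (b.repr (b (F.dual i) * b j) F.zero : ℂ) = if i = j then 1 else 0 := by
      rw [hbmul]
      simp only [map_sum, map_smul, Module.Basis.repr_self]
      rw [Finset.sum_apply']
      simp only [Finsupp.smul_single, smul_eq_mul, mul_one, Finsupp.single_apply]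
      rw [Finset.sum_ite_eq' Finset.univ F.zero (fun m => (F.N (F.dual i) j m : ℂ))]
      simp [F.duality, F.dual_dual, eq_comm]
    rw [← hrepr, h]
    refine Finset.sum_congr rfl fun ρ _ => ?_
    rw [map_mul, hstarchar]
  have key : ∀ u v : I → ℂ,
      (∑ ρ : A →ₐ[ℂ] ℂ, ((formalCodegree b ρ : ℝ) : ℂ)⁻¹ *
        ((∑ i, u i * starRingEnd ℂ (ρ (b i))) * (∑ j, v j * ρ (b j))))
      = ∑ i, u i * v i := by
    intro u v
    have step : ∀ ρ : A →ₐ[ℂ] ℂ,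
        ((formalCodegree b ρ : ℝ) : ℂ)⁻¹ *
          ((∑ i, u i * starRingEnd ℂ (ρ (b i))) * (∑ j, v j * ρ (b j)))
        = ∑ i, ∑ j, u i * v j *
            (((formalCodegree b ρ : ℝ) : ℂ)⁻¹ * (starRingEnd ℂ (ρ (b i)) * ρ (b j))) := by
      intro ρ
      rw [Finset.sum_mul]
      rw [Finset.mul_sum]
      refine Finset.sum_congr rfl fun i _ => ?_
      rw [Finset.mul_sum, Finset.mul_sum]
      refine Finset.sum_congr rfl fun j _ => ?_
      ring
    calc (∑ ρ : A →ₐ[ℂ] ℂ, ((formalCodegree b ρ : ℝ) : ℂ)⁻¹ *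
          ((∑ i, u i * starRingEnd ℂ (ρ (b i))) * (∑ j, v j * ρ (b j))))
        = ∑ ρ : A →ₐ[ℂ] ℂ, ∑ i, ∑ j, u i * v j *
            (((formalCodegree b ρ : ℝ) : ℂ)⁻¹ * (starRingEnd ℂ (ρ (b i)) * ρ (b j))) :=
          Finset.sum_congr rfl fun ρ _ => step ρ
      _ = ∑ i, ∑ j, ∑ ρ : A →ₐ[ℂ] ℂ, u i * v j *
            (((formalCodegree b ρ : ℝ) : ℂ)⁻¹ * (starRingEnd ℂ (ρ (b i)) * ρ (b j))) := by
          rw [Finset.sum_comm]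
          refine Finset.sum_congr rfl fun i _ => Finset.sum_comm
      _ = ∑ i, ∑ j, u i * v j * (if i = j then 1 else 0) := by
          refine Finset.sum_congr rfl fun i _ => Finset.sum_congr rfl fun j _ => ?_
          rw [← Finset.mul_sum, orth]
      _ = ∑ i, u i * v i := by
          refine Finset.sum_congr rfl fun i _ => ?_
          simp [mul_ite]
  constructor
  · intro ρ₁ ρ₂ σ
    unfold I₃
    exact Finset.sum_congr rfl fun i _ => by ring
  · intro ρ₁ ρ₂ ρ₃ σ
    have hI : ∀ (τ₁ τ₂ ρ : A →ₐ[ℂ] ℂ), I₃ b δ τ₁ τ₂ (conjChar ρ)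
        = ∑ i, ((δ (b i))⁻¹ * (τ₁ (b i) * τ₂ (b i))) * starRingEnd ℂ (ρ (b i)) := by
      intro τ₁ τ₂ ρ
      unfold I₃
      refine Finset.sum_congr rfl fun i _ => ?_
      rw [hconj]; ring
    have hJ : ∀ (τ₂ τ₃ ρ : A →ₐ[ℂ] ℂ), I₃ b δ ρ τ₂ τ₃
        = ∑ j, ((δ (b j))⁻¹ * (τ₂ (b j) * τ₃ (b j))) * ρ (b j) := by
      intro τ₂ τ₃ ρ
      unfold I₃
      refine Finset.sum_congr rfl fun j _ => ?_
      ring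
    have hJ2 : ∀ (τ₁ τ₃ ρ : A →ₐ[ℂ] ℂ), I₃ b δ τ₁ ρ τ₃
        = ∑ j, ((δ (b j))⁻¹ * (τ₁ (b j) * τ₃ (b j))) * ρ (b j) := by
      intro τ₁ τ₃ ρ
      unfold I₃
      refine Finset.sum_congr rfl fun j _ => ?_
      ring
    calc (∑ ρ : A →ₐ[ℂ] ℂ, ((formalCodegree b ρ : ℝ) : ℂ)⁻¹ *
          I₃ b δ ρ₁ ρ₂ (conjChar ρ) * I₃ b δ ρ ρ₃ σ)
        = ∑ ρ : A →ₐ[ℂ] ℂ, ((formalCodegree b ρ : ℝ) : ℂ)⁻¹ *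
            ((∑ i, ((δ (b i))⁻¹ * (ρ₁ (b i) * ρ₂ (b i))) * starRingEnd ℂ (ρ (b i))) *
             (∑ j, ((δ (b j))⁻¹ * (ρ₃ (b j) * σ (b j))) * ρ (b j))) := by
          refine Finset.sum_congr rfl fun ρ _ => ?_
          rw [hI, hJ, mul_assoc]
      _ = ∑ i, ((δ (b i))⁻¹ * (ρ₁ (b i) * ρ₂ (b i))) * ((δ (b i))⁻¹ * (ρ₃ (b i) * σ (b i))) :=
          key _ _
      _ = ∑ i, ((δ (b i))⁻¹ * (ρ₂ (b i) * ρ₃ (b i))) * ((δ (b i))⁻¹ * (ρ₁ (b i) * σ (b i))) :=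
          Finset.sum_congr rfl fun i _ => by ring
      _ = ∑ ρ : A →ₐ[ℂ] ℂ, ((formalCodegree b ρ : ℝ) : ℂ)⁻¹ *
            I₃ b δ ρ₂ ρ₃ (conjChar ρ) * I₃ b δ ρ₁ ρ σ := by
          rw [← key (fun i => (δ (b i))⁻¹ * (ρ₂ (b i) * ρ₃ (b i)))
                (fun i => (δ (b i))⁻¹ * (ρ₁ (b i) * σ (b i)))]
          refine Finset.sum_congr rfl fun ρ _ => ?_
          rw [hI, hJ2, mul_assoc]
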